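/- For every real x > 0, every h ∈ ℂ with Re(h) > 1, and every t ∈ ℂ, all the series below converge absolutely and −t · Σ_{m=0}^{∞} q^{hm+x}·exp([x+m]_q·t) + (h−1)(1−q) · Σ_{m=0}^{∞} q^{(h−1)m}·exp([x+m]_q·t) = exp(t/(1−q)) · Σ_{l=0}^{∞} (−1)^l·q^{lx}·((l+h−1)/[l+h−1]_q)·(1/(1−q))^l·t^l/l!. -/

import Mathlib

open Complex Finset Filter

/-- Complex power `q^z := exp(z·log q)` for a real base `q`. -/
noncomputable def qcpow (q : ℝ) (z : ℂ) : ℂ := Complex.exp (z * (Real.log q : ℂ))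

/-- The complex `q`-number `[z]_q = (1 - q^z)/(1 - q)`. -/
noncomputable def qnum (q : ℝ) (z : ℂ) : ℂ := (1 - qcpow q z) / (1 - (q : ℂ))

/-- The real `q`-number `[y]_q = (1 - q^y)/(1 - q)` for real `y`. -/
noncomputable def qnumR (q : ℝ) (y : ℝ) : ℝ := (1 - Real.exp (y * Real.log q)) / (1 - q)

/-- The `(h,q)`-Bernoulli polynomial
`β_{n,q}^h(x) = (1-q)^{-n} ∑_{l=0}^{n} C(n,l) (-1)^l q^{lx} (l+h-1)/[l+h-1]_q`. -/
noncomputable def qbeta (q : ℝ) (h : ℂ) (n : ℕ) (x : ℝ) : ℂ :=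
  (1 - (q : ℂ))⁻¹ ^ n * ∑ l ∈ Finset.range (n + 1),
    (n.choose l : ℂ) * (-1) ^ l * qcpow q ((l : ℂ) * (x : ℂ)) *
      (((l : ℂ) + h - 1) / qnum q ((l : ℂ) + h - 1))

lemma aux_qcpow_add (q : ℝ) (z w : ℂ) : qcpow q (z + w) = qcpow q z * qcpow q w := by
  simp [qcpow, add_mul, Complex.exp_add]

lemma aux_qcpow_pow (q : ℝ) (z : ℂ) (n : ℕ) : qcpow q z ^ n = qcpow q ((n : ℂ) * z) := by
  rw [qcpow, qcpow, ← Complex.exp_nat_mul, mul_assoc]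

lemma aux_norm_qcpow (q : ℝ) (z : ℂ) : ‖qcpow q z‖ = Real.exp (z.re * Real.log q) := by
  rw [qcpow, Complex.norm_exp]
  congr 1
  simp [Complex.mul_re]

lemma aux_exp_tsum (z : ℂ) : Complex.exp z = ∑' n : ℕ, z ^ n / n.factorial := by
  rw [Complex.exp_eq_exp_ℂ, NormedSpace.exp_eq_tsum_div]

lemma aux_ofReal_qnumR {q : ℝ} (y : ℝ) :
    ((qnumR q y : ℝ) : ℂ) = (1 - qcpow q (y : ℂ)) / (1 - (q : ℂ)) := by
  rw [qnumR, qcpow]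
  push_cast [Complex.ofReal_exp]
  ring_nf

lemma aux_norm_qcpow_lt_one {q : ℝ} (hq0 : 0 < q) (hq1 : q < 1) {z : ℂ} (hz : 0 < z.re) :
    ‖qcpow q z‖ < 1 := by
  rw [aux_norm_qcpow]
  exact Real.exp_lt_one_iff.mpr (mul_neg_of_pos_of_neg hz (Real.log_neg hq0 hq1))

lemma aux_one_sub_qcpow_ne {q : ℝ} (hq0 : 0 < q) (hq1 : q < 1) {z : ℂ} (hz : 0 < z.re) :
    (1 : ℂ) - qcpow q z ≠ 0 := by
  intro H
  have h1 : qcpow q z = 1 := by linear_combination -H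
  have := aux_norm_qcpow_lt_one hq0 hq1 hz
  rw [h1] at this; simp at this

lemma aux_abs_qnumR {q : ℝ} (hq0 : 0 < q) (hq1 : q < 1) {y : ℝ} (hy : 0 ≤ y) :
    |qnumR q y| ≤ 1 / (1 - q) := by
  have hL : Real.log q < 0 := Real.log_neg hq0 hq1
  have h1 : Real.exp (y * Real.log q) ≤ 1 :=
    Real.exp_le_one_iff.mpr (mul_nonpos_of_nonneg_of_nonpos hy hL.le)
  have h0 : (0:ℝ) < Real.exp (y * Real.log q) := Real.exp_pos _
  have hq' : (0:ℝ) < 1 - q := by linarith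
  rw [qnumR, abs_div, abs_of_pos hq']
  rw [_root_.abs_of_nonneg (by linarith : (0:ℝ) ≤ 1 - Real.exp (y * Real.log q))]
  gcongr
  linarith

lemma aux_norm_exp_le (z : ℂ) : ‖Complex.exp z‖ ≤ Real.exp ‖z‖ := by
  rw [Complex.norm_exp]
  exact Real.exp_le_exp.mpr (Complex.re_le_norm z)

lemma aux_summable_m {q : ℝ} (hq0 : 0 < q) (hq1 : q < 1) (a b : ℂ) (ha : 0 < a.re)
    {x : ℝ} (hx : 0 ≤ x) (t : ℂ) :
    Summable (fun m : ℕ => qcpow q (a * m + b) * Complex.exp ((qnumR q (x + m) : ℂ) * t)) := by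
  have hq' : (0:ℝ) < 1 - q := by linarith
  have hr1 : Real.exp (a.re * Real.log q) < 1 :=
    Real.exp_lt_one_iff.mpr (mul_neg_of_pos_of_neg ha (Real.log_neg hq0 hq1))
  apply Summable.of_norm_bounded (g := fun m => (Real.exp (b.re * Real.log q) * Real.exp (1 / (1 - q) * ‖t‖)) *
      Real.exp (a.re * Real.log q) ^ m)
  · exact (summable_geometric_of_lt_one (Real.exp_nonneg _) hr1).mul_left _
  · intro m
    rw [norm_mul, aux_norm_qcpow]
    have h1 : (a * (m:ℂ) + b).re = a.re * m + b.re := by simp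
    rw [h1]
    calc Real.exp ((a.re * ↑m + b.re) * Real.log q) * ‖Complex.exp ((qnumR q (x + ↑m) : ℝ) * t)‖
        ≤ Real.exp ((a.re * ↑m + b.re) * Real.log q) * Real.exp (1 / (1 - q) * ‖t‖) := by
          refine mul_le_mul_of_nonneg_left ?_ (Real.exp_nonneg _)
          refine (aux_norm_exp_le _).trans (Real.exp_le_exp.mpr ?_)
          rw [norm_mul, Complex.norm_real, Real.norm_eq_abs]
          have hm : (0:ℝ) ≤ x + m := by positivity
          exact mul_le_mul_of_nonneg_right (aux_abs_qnumR hq0 hq1 hm) (norm_nonneg t)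
      _ = Real.exp (b.re * Real.log q) * Real.exp (1 / (1 - q) * ‖t‖) *
            Real.exp (a.re * Real.log q) ^ m := by
          rw [← Real.exp_nat_mul, ← Real.exp_add, ← Real.exp_add, ← Real.exp_add]
          congr 1
          ring

lemma aux_exp_factor {q : ℝ} (hq0 : 0 < q) (hq1 : q < 1) (y : ℝ) (t : ℂ) :
    Complex.exp ((qnumR q y : ℂ) * t) =
      Complex.exp (t / (1 - (q : ℂ))) * Complex.exp (-(qcpow q (y : ℂ) * (t / (1 - (q : ℂ))))) := by
  have hqC : (1 : ℂ) - (q : ℂ) ≠ 0 := by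
    rw [← Complex.ofReal_one, ← Complex.ofReal_sub]
    exact Complex.ofReal_ne_zero.mpr (by linarith)
  rw [← Complex.exp_add, aux_ofReal_qnumR]
  congr 1
  field_simp
  ring

lemma aux_exp_neg_tsum (u c : ℂ) :
    Complex.exp (-(u * c)) = ∑' l : ℕ, (-1) ^ l * u ^ l * c ^ l / l.factorial := by
  rw [aux_exp_tsum]
  apply tsum_congr; intro l
  rw [neg_pow, mul_pow]
  ring

lemma aux_summable_double {q : ℝ} (hq0 : 0 < q) (hq1 : q < 1) (a b : ℂ) (ha : 0 < a.re)
    {x : ℝ} (hx : 0 ≤ x) (E c : ℂ) :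
    Summable (Function.uncurry fun (l m : ℕ) =>
      qcpow q (a * m + b) * E *
        ((-1) ^ l * qcpow q ((l : ℂ) * ((x : ℂ) + m)) * c ^ l / (l.factorial : ℂ))) := by
  have hL : Real.log q < 0 := Real.log_neg hq0 hq1
  have hr1 : Real.exp (a.re * Real.log q) < 1 :=
    Real.exp_lt_one_iff.mpr (mul_neg_of_pos_of_neg ha hL)
  apply Summable.of_norm_bounded (g := fun p : ℕ × ℕ =>
    (Real.exp (b.re * Real.log q) * ‖E‖ * (‖c‖ ^ p.1 / p.1.factorial)) *
      Real.exp (a.re * Real.log q) ^ p.2)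
  · exact Summable.mul_of_nonneg
      (((Real.summable_pow_div_factorial ‖c‖).mul_left _))
      (summable_geometric_of_lt_one (Real.exp_nonneg _) hr1)
      (fun l => by positivity) (fun m => by positivity)
  · rintro ⟨l, m⟩
    simp only [Function.uncurry]
    have hre1 : (a * (m : ℂ) + b).re = a.re * m + b.re := by simp
    have hre2 : (((l : ℕ) : ℂ) * ((x : ℂ) + (m : ℕ))).re = (l : ℝ) * (x + m) := by simp
    rw [norm_mul, norm_mul, norm_div, norm_mul, norm_mul, norm_pow, norm_pow,
      aux_norm_qcpow, aux_norm_qcpow, hre1, hre2]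
    have e1 : Real.exp ((a.re * ↑m + b.re) * Real.log q)
        = Real.exp (b.re * Real.log q) * Real.exp (a.re * Real.log q) ^ m := by
      rw [← Real.exp_nat_mul, ← Real.exp_add]; congr 1; ring
    have e2 : Real.exp (((l : ℝ) * (x + m)) * Real.log q) ≤ 1 :=
      Real.exp_le_one_iff.mpr (mul_nonpos_of_nonneg_of_nonpos (by positivity) hL.le)
    have e3 : ‖(-1 : ℂ)‖ = 1 := by simp
    have e4 : ‖((l.factorial : ℕ) : ℂ)‖ = (l.factorial : ℝ) := by
      rw [Complex.norm_natCast]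
    rw [e3, one_pow, e4, e1]
    have hfl : (0:ℝ) < l.factorial := by positivity
    calc Real.exp (b.re * Real.log q) * Real.exp (a.re * Real.log q) ^ m * ‖E‖ *
          (1 * Real.exp ((l : ℝ) * (x + ↑m) * Real.log q) * ‖c‖ ^ l / ↑l.factorial)
        ≤ Real.exp (b.re * Real.log q) * Real.exp (a.re * Real.log q) ^ m * ‖E‖ *
          (1 * 1 * ‖c‖ ^ l / ↑l.factorial) := by gcongr
      _ = Real.exp (b.re * Real.log q) * ‖E‖ * (‖c‖ ^ l / ↑l.factorial) *
          Real.exp (a.re * Real.log q) ^ m := by ring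

lemma aux_term_expand {q : ℝ} (hq0 : 0 < q) (hq1 : q < 1) (a b : ℂ) (x : ℝ) (t : ℂ) (m : ℕ) :
    qcpow q (a * m + b) * Complex.exp ((qnumR q (x + m) : ℂ) * t) =
      ∑' l : ℕ, qcpow q (a * m + b) * Complex.exp (t / (1 - (q : ℂ))) *
        ((-1) ^ l * qcpow q ((l : ℂ) * ((x : ℂ) + m)) * (t / (1 - (q : ℂ))) ^ l /
          (l.factorial : ℂ)) := by
  have hcast : ((x + (m : ℕ) : ℝ) : ℂ) = (x : ℂ) + (m : ℂ) := by push_cast; ring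
  rw [aux_exp_factor hq0 hq1, hcast, aux_exp_neg_tsum, ← mul_assoc, ← tsum_mul_left]
  apply tsum_congr; intro l
  rw [aux_qcpow_pow]

lemma aux_geom_eval {q : ℝ} (hq0 : 0 < q) (hq1 : q < 1) (a b : ℂ) (ha : 0 < a.re)
    (x : ℝ) (E c : ℂ) (l : ℕ) :
    (∑' m : ℕ, qcpow q (a * m + b) * E *
        ((-1) ^ l * qcpow q ((l : ℂ) * ((x : ℂ) + m)) * c ^ l / (l.factorial : ℂ))) =
      E * ((-1) ^ l * c ^ l / (l.factorial : ℂ)) * qcpow q (b + (l : ℂ) * x) *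
        (1 - qcpow q (a + l))⁻¹ := by
  have hlt : ‖qcpow q (a + (l : ℂ))‖ < 1 := by
    apply aux_norm_qcpow_lt_one hq0 hq1
    have : (a + (l : ℂ)).re = a.re + l := by simp
    rw [this]; positivity
  have hform : ∀ m : ℕ, qcpow q (a * m + b) * E *
      ((-1) ^ l * qcpow q ((l : ℂ) * ((x : ℂ) + m)) * c ^ l / (l.factorial : ℂ)) =
      (E * ((-1) ^ l * c ^ l / (l.factorial : ℂ)) * qcpow q (b + (l : ℂ) * x)) *
        qcpow q (a + l) ^ m := by
    intro m
    rw [aux_qcpow_pow,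
      show ((l : ℂ) * ((x : ℂ) + m)) = (l : ℂ) * x + (l : ℂ) * m from by ring,
      show (a * (m : ℂ) + b) = b + a * m from by ring,
      show ((m : ℂ) * (a + l)) = a * m + (l : ℂ) * m from by ring,
      aux_qcpow_add, aux_qcpow_add, aux_qcpow_add, aux_qcpow_add]
    ring
  rw [tsum_congr hform, tsum_mul_left, tsum_geometric_of_norm_lt_one hlt]


lemma aux_alg1 (E t c qC P D F u b : ℂ) (l : ℕ)
    (hqC : qC ≠ 0) (hD : D ≠ 0) (hF : F ≠ 0) (ht : t = qC * c) :
    E * ((-1) ^ l * P * ((u + b - 1) / (D / qC)) * (1 / qC) ^ l * t ^ l / F)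
      = (b - 1) * qC * (E * ((-1) ^ l * c ^ l / F) * P * D⁻¹) +
        (u * qC * (E * ((-1) ^ l * c ^ l / F) * P * D⁻¹)) := by
  subst ht
  rw [mul_pow, div_pow, one_pow]
  field_simp
  ring

lemma aux_alg2 (E t c qC P D F : ℂ) (l : ℕ)
    (hqC : qC ≠ 0) (hD : D ≠ 0) (hF : F ≠ 0) (hl : ((l : ℂ) + 1) ≠ 0) (ht : t = qC * c) :
    -t * (E * ((-1) ^ l * c ^ l / F) * P * D⁻¹)
      = ((l : ℂ) + 1) * qC *
          (E * ((-1) ^ (l + 1) * c ^ (l + 1) / (((l : ℂ) + 1) * F)) * P * D⁻¹) := by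
  subst ht
  rw [pow_succ, pow_succ]
  field_simp

/-- the generating function identity
`-t ∑ q^{hm+x} e^{[x+m]_q t} + (h-1)(1-q) ∑ q^{(h-1)m} e^{[x+m]_q t}
  = e^{t/(1-q)} ∑_l (-1)^l q^{lx} ((l+h-1)/[l+h-1]_q) (1/(1-q))^l t^l/l!`,
with all series converging absolutely. -/
theorem qbeta_gen_fun_expansion (q : ℝ) (hq0 : 0 < q) (hq1 : q < 1)
    (h : ℂ) (hh : 1 < h.re) (x : ℝ) (hx : 0 < x) (t : ℂ) :
    Summable (fun m : ℕ => qcpow q (h * (m : ℂ) + (x : ℂ)) *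
      Complex.exp ((qnumR q (x + m) : ℂ) * t)) ∧
    Summable (fun m : ℕ => qcpow q ((h - 1) * (m : ℂ)) *
      Complex.exp ((qnumR q (x + m) : ℂ) * t)) ∧
    Summable (fun l : ℕ => (-1) ^ l * qcpow q ((l : ℂ) * (x : ℂ)) *
      (((l : ℂ) + h - 1) / qnum q ((l : ℂ) + h - 1)) *
      (1 / (1 - (q : ℂ))) ^ l * t ^ l / (l.factorial : ℂ)) ∧
    (-t * ∑' m : ℕ, qcpow q (h * (m : ℂ) + (x : ℂ)) *
        Complex.exp ((qnumR q (x + m) : ℂ) * t)) +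
      (h - 1) * (1 - (q : ℂ)) *
        (∑' m : ℕ, qcpow q ((h - 1) * (m : ℂ)) *
          Complex.exp ((qnumR q (x + m) : ℂ) * t)) =
      Complex.exp (t / (1 - (q : ℂ))) *
        ∑' l : ℕ, (-1) ^ l * qcpow q ((l : ℂ) * (x : ℂ)) *
          (((l : ℂ) + h - 1) / qnum q ((l : ℂ) + h - 1)) *
          (1 / (1 - (q : ℂ))) ^ l * t ^ l / (l.factorial : ℂ) := by
  have hq' : (0:ℝ) < 1 - q := by linarith
  have hqC : (1 : ℂ) - (q : ℂ) ≠ 0 := by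
    rw [← Complex.ofReal_one, ← Complex.ofReal_sub]
    exact Complex.ofReal_ne_zero.mpr (by linarith)
  have hEne : Complex.exp (t / (1 - (q : ℂ))) ≠ 0 := Complex.exp_ne_zero _
  have htc : t = (1 - (q : ℂ)) * (t / (1 - (q : ℂ))) := by field_simp
  have hha : (0:ℝ) < h.re := by linarith
  have hh1 : (0:ℝ) < (h - 1).re := by
    rw [Complex.sub_re, Complex.one_re]; linarith
  have hrel : ∀ l : ℕ, (0:ℝ) < ((l : ℂ) + h - 1).re := by
    intro l
    have e : ((l : ℂ) + h - 1).re = (l : ℝ) + h.re - 1 := by simp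
    rw [e]
    have : (0:ℝ) ≤ (l : ℝ) := Nat.cast_nonneg l
    linarith
  have hrehl : ∀ l : ℕ, (0:ℝ) < (h + (l : ℂ)).re := by
    intro l
    have e : (h + (l : ℂ)).re = h.re + (l : ℝ) := by simp
    rw [e]
    have : (0:ℝ) ≤ (l : ℝ) := Nat.cast_nonneg l
    linarith
  have hne : ∀ l : ℕ, (1 : ℂ) - qcpow q ((l : ℂ) + h - 1) ≠ 0 :=
    fun l => aux_one_sub_qcpow_ne hq0 hq1 (hrel l)
  have hne' : ∀ l : ℕ, (1 : ℂ) - qcpow q (h + (l : ℂ)) ≠ 0 :=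
    fun l => aux_one_sub_qcpow_ne hq0 hq1 (hrehl l)
  have hfac : ∀ l : ℕ, ((l.factorial : ℕ) : ℂ) ≠ 0 :=
    fun l => Nat.cast_ne_zero.mpr l.factorial_ne_zero
  have hs1 : Summable (fun m : ℕ => qcpow q (h * (m : ℂ) + (x : ℂ)) *
      Complex.exp ((qnumR q (x + m) : ℂ) * t)) :=
    aux_summable_m hq0 hq1 h x hha hx.le t
  have hs2 : Summable (fun m : ℕ => qcpow q ((h - 1) * (m : ℂ)) *
      Complex.exp ((qnumR q (x + m) : ℂ) * t)) := by
    have := aux_summable_m hq0 hq1 (h - 1) 0 hh1 hx.le t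
    simpa using this
  have hF1 := aux_summable_double hq0 hq1 h (x : ℂ) hha hx.le (Complex.exp (t / (1 - (q : ℂ)))) ((t / (1 - (q : ℂ))))
  have hF2 := aux_summable_double hq0 hq1 (h - 1) 0 hh1 hx.le (Complex.exp (t / (1 - (q : ℂ)))) ((t / (1 - (q : ℂ))))
  have hgeo1 : ∀ l : ℕ, (∑' m : ℕ, qcpow q (h * (m : ℂ) + (x : ℂ)) * Complex.exp (t / (1 - (q : ℂ))) * ((-1) ^ l * qcpow q (((l) : ℂ) * ((x : ℂ) + (m : ℂ))) * (t / (1 - (q : ℂ))) ^ l / ((l).factorial : ℂ))) = Complex.exp (t / (1 - (q : ℂ))) * ((-1) ^ l * (t / (1 - (q : ℂ))) ^ l / ((l).factorial : ℂ)) * qcpow q ((x : ℂ) + ((l) : ℂ) * (x : ℂ)) * (1 - qcpow q (h + ((l) : ℂ)))⁻¹ :=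
    fun l => aux_geom_eval hq0 hq1 h (x : ℂ) hha x (Complex.exp (t / (1 - (q : ℂ)))) ((t / (1 - (q : ℂ)))) l
  have hgeo2 : ∀ l : ℕ, (∑' m : ℕ, qcpow q ((h - 1) * (m : ℂ) + 0) * Complex.exp (t / (1 - (q : ℂ))) * ((-1) ^ l * qcpow q (((l) : ℂ) * ((x : ℂ) + (m : ℂ))) * (t / (1 - (q : ℂ))) ^ l / ((l).factorial : ℂ))) = Complex.exp (t / (1 - (q : ℂ))) * ((-1) ^ l * (t / (1 - (q : ℂ))) ^ l / ((l).factorial : ℂ)) * qcpow q (((l) : ℂ) * (x : ℂ)) * (1 - qcpow q (((l) : ℂ) + h - 1))⁻¹ := by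
    intro l
    rw [aux_geom_eval hq0 hq1 (h - 1) 0 hh1 x (Complex.exp (t / (1 - (q : ℂ)))) ((t / (1 - (q : ℂ)))) l, zero_add,
      show (h - 1 + (l : ℂ)) = (l : ℂ) + h - 1 from by ring]
  have hS1 : (∑' m : ℕ, qcpow q (h * (m : ℂ) + (x : ℂ)) *
      Complex.exp ((qnumR q (x + m) : ℂ) * t)) = ∑' l : ℕ, Complex.exp (t / (1 - (q : ℂ))) * ((-1) ^ l * (t / (1 - (q : ℂ))) ^ l / ((l).factorial : ℂ)) * qcpow q ((x : ℂ) + ((l) : ℂ) * (x : ℂ)) * (1 - qcpow q (h + ((l) : ℂ)))⁻¹ := by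
    calc (∑' m : ℕ, qcpow q (h * (m : ℂ) + (x : ℂ)) *
        Complex.exp ((qnumR q (x + m) : ℂ) * t))
        = ∑' (m : ℕ) (l : ℕ), qcpow q (h * (m : ℂ) + (x : ℂ)) * Complex.exp (t / (1 - (q : ℂ))) * ((-1) ^ l * qcpow q (((l) : ℂ) * ((x : ℂ) + (m : ℂ))) * (t / (1 - (q : ℂ))) ^ l / ((l).factorial : ℂ)) :=
          tsum_congr fun m => aux_term_expand hq0 hq1 h (x : ℂ) x t m
      _ = ∑' (l : ℕ) (m : ℕ), qcpow q (h * (m : ℂ) + (x : ℂ)) * Complex.exp (t / (1 - (q : ℂ))) * ((-1) ^ l * qcpow q (((l) : ℂ) * ((x : ℂ) + (m : ℂ))) * (t / (1 - (q : ℂ))) ^ l / ((l).factorial : ℂ)) := hF1.tsum_comm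
      _ = ∑' l : ℕ, Complex.exp (t / (1 - (q : ℂ))) * ((-1) ^ l * (t / (1 - (q : ℂ))) ^ l / ((l).factorial : ℂ)) * qcpow q ((x : ℂ) + ((l) : ℂ) * (x : ℂ)) * (1 - qcpow q (h + ((l) : ℂ)))⁻¹ := tsum_congr hgeo1
  have hS2 : (∑' m : ℕ, qcpow q ((h - 1) * (m : ℂ)) *
      Complex.exp ((qnumR q (x + m) : ℂ) * t)) = ∑' l : ℕ, Complex.exp (t / (1 - (q : ℂ))) * ((-1) ^ l * (t / (1 - (q : ℂ))) ^ l / ((l).factorial : ℂ)) * qcpow q (((l) : ℂ) * (x : ℂ)) * (1 - qcpow q (((l) : ℂ) + h - 1))⁻¹ := by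
    calc (∑' m : ℕ, qcpow q ((h - 1) * (m : ℂ)) *
        Complex.exp ((qnumR q (x + m) : ℂ) * t))
        = ∑' (m : ℕ) (l : ℕ), qcpow q ((h - 1) * (m : ℂ) + 0) * Complex.exp (t / (1 - (q : ℂ))) * ((-1) ^ l * qcpow q (((l) : ℂ) * ((x : ℂ) + (m : ℂ))) * (t / (1 - (q : ℂ))) ^ l / ((l).factorial : ℂ)) := by
          apply tsum_congr; intro m
          conv_lhs => rw [show ((h - 1) * (m : ℂ)) = (h - 1) * (m : ℂ) + 0 from
            (add_zero _).symm]
          exact aux_term_expand hq0 hq1 (h - 1) 0 x t m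
      _ = ∑' (l : ℕ) (m : ℕ), qcpow q ((h - 1) * (m : ℂ) + 0) * Complex.exp (t / (1 - (q : ℂ))) * ((-1) ^ l * qcpow q (((l) : ℂ) * ((x : ℂ) + (m : ℂ))) * (t / (1 - (q : ℂ))) ^ l / ((l).factorial : ℂ)) := hF2.tsum_comm
      _ = ∑' l : ℕ, Complex.exp (t / (1 - (q : ℂ))) * ((-1) ^ l * (t / (1 - (q : ℂ))) ^ l / ((l).factorial : ℂ)) * qcpow q (((l) : ℂ) * (x : ℂ)) * (1 - qcpow q (((l) : ℂ) + h - 1))⁻¹ := tsum_congr hgeo2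
  have hkey : ∀ l : ℕ,
      Complex.exp (t / (1 - (q : ℂ))) * ((-1) ^ l * qcpow q (((l) : ℂ) * (x : ℂ)) * ((((l) : ℂ) + h - 1) / qnum q (((l) : ℂ) + h - 1)) * (1 / (1 - (q : ℂ))) ^ l * t ^ l / ((l).factorial : ℂ))
      = (h - 1) * (1 - (q : ℂ)) * (Complex.exp (t / (1 - (q : ℂ))) * ((-1) ^ l * (t / (1 - (q : ℂ))) ^ l / ((l).factorial : ℂ)) * qcpow q (((l) : ℂ) * (x : ℂ)) * (1 - qcpow q (((l) : ℂ) + h - 1))⁻¹) + ((l : ℂ) * (1 - (q : ℂ)) * (Complex.exp (t / (1 - (q : ℂ))) * ((-1) ^ l * (t / (1 - (q : ℂ))) ^ l / ((l).factorial : ℂ)) * qcpow q (((l) : ℂ) * (x : ℂ)) * (1 - qcpow q (((l) : ℂ) + h - 1))⁻¹)) := by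
    intro l
    rw [qnum]
    exact aux_alg1 (Complex.exp (t / (1 - (q : ℂ)))) t ((t / (1 - (q : ℂ)))) (1 - (q : ℂ)) (qcpow q ((l : ℂ) * (x : ℂ)))
      (1 - qcpow q ((l : ℂ) + h - 1)) ((l.factorial : ℕ) : ℂ) ((l : ℂ)) h l
      hqC (hne l) (hfac l) htc
  have hshift : ∀ l : ℕ, -t * (Complex.exp (t / (1 - (q : ℂ))) * ((-1) ^ l * (t / (1 - (q : ℂ))) ^ l / ((l).factorial : ℂ)) * qcpow q ((x : ℂ) + ((l) : ℂ) * (x : ℂ)) * (1 - qcpow q (h + ((l) : ℂ)))⁻¹) = (((l + 1 : ℕ)) : ℂ) * (1 - (q : ℂ)) * (Complex.exp (t / (1 - (q : ℂ))) * ((-1) ^ (l + 1) * (t / (1 - (q : ℂ))) ^ (l + 1) / (((l + 1)).factorial : ℂ)) * qcpow q ((((l + 1 : ℕ)) : ℂ) * (x : ℂ)) * (1 - qcpow q ((((l + 1 : ℕ)) : ℂ) + h - 1))⁻¹) := by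
    intro l
    have e1 : (((l + 1 : ℕ)) : ℂ) = (l : ℂ) + 1 := by push_cast; ring
    have e2 : (((l + 1 : ℕ).factorial : ℕ) : ℂ) = ((l : ℂ) + 1) * ((l.factorial : ℕ) : ℂ) := by
      rw [Nat.factorial_succ]; push_cast; ring
    have e3 : qcpow q (((l : ℂ) + 1) * (x : ℂ)) = qcpow q ((x : ℂ) + (l : ℂ) * (x : ℂ)) := by
      congr 1; ring
    have e4 : ((l : ℂ) + 1 + h - 1) = h + (l : ℂ) := by ring
    rw [e1, e2, e3, e4]
    have hl1 : ((l : ℂ) + 1) ≠ 0 := Nat.cast_add_one_ne_zero l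
    exact aux_alg2 (Complex.exp (t / (1 - (q : ℂ)))) t ((t / (1 - (q : ℂ)))) (1 - (q : ℂ)) (qcpow q ((x : ℂ) + (l : ℂ) * (x : ℂ)))
      (1 - qcpow q (h + (l : ℂ))) ((l.factorial : ℕ) : ℂ) l
      hqC (hne' l) (hfac l) hl1 htc
  have hG1sum : Summable (fun l : ℕ => Complex.exp (t / (1 - (q : ℂ))) * ((-1) ^ l * (t / (1 - (q : ℂ))) ^ l / ((l).factorial : ℂ)) * qcpow q ((x : ℂ) + ((l) : ℂ) * (x : ℂ)) * (1 - qcpow q (h + ((l) : ℂ)))⁻¹) := hF1.prod.congr hgeo1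
  have hG2sum : Summable (fun l : ℕ => Complex.exp (t / (1 - (q : ℂ))) * ((-1) ^ l * (t / (1 - (q : ℂ))) ^ l / ((l).factorial : ℂ)) * qcpow q (((l) : ℂ) * (x : ℂ)) * (1 - qcpow q (((l) : ℂ) + h - 1))⁻¹) := hF2.prod.congr hgeo2
  have hDsum : Summable (fun l : ℕ => (l : ℂ) * (1 - (q : ℂ)) * (Complex.exp (t / (1 - (q : ℂ))) * ((-1) ^ l * (t / (1 - (q : ℂ))) ^ l / ((l).factorial : ℂ)) * qcpow q (((l) : ℂ) * (x : ℂ)) * (1 - qcpow q (((l) : ℂ) + h - 1))⁻¹)) := by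
    rw [← summable_nat_add_iff 1]
    exact (hG1sum.mul_left (-t)).congr fun l => hshift l
  have hTsum' : Summable (fun l : ℕ => Complex.exp (t / (1 - (q : ℂ))) * ((-1) ^ l * qcpow q (((l) : ℂ) * (x : ℂ)) * ((((l) : ℂ) + h - 1) / qnum q (((l) : ℂ) + h - 1)) * (1 / (1 - (q : ℂ))) ^ l * t ^ l / ((l).factorial : ℂ))) :=
    ((hG2sum.mul_left ((h - 1) * (1 - (q : ℂ)))).add hDsum).congr fun l => (hkey l).symm
  have hsT : Summable (fun l : ℕ => (-1) ^ l * qcpow q (((l) : ℂ) * (x : ℂ)) * ((((l) : ℂ) + h - 1) / qnum q (((l) : ℂ) + h - 1)) * (1 / (1 - (q : ℂ))) ^ l * t ^ l / ((l).factorial : ℂ)) := by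
    refine (hTsum'.mul_left (Complex.exp (t / (1 - (q : ℂ))))⁻¹).congr fun l => ?_
    rw [inv_mul_cancel_left₀ hEne]
  refine ⟨hs1, hs2, hsT, ?_⟩
  rw [hS1, hS2]
  calc -t * (∑' l : ℕ, Complex.exp (t / (1 - (q : ℂ))) * ((-1) ^ l * (t / (1 - (q : ℂ))) ^ l / ((l).factorial : ℂ)) * qcpow q ((x : ℂ) + ((l) : ℂ) * (x : ℂ)) * (1 - qcpow q (h + ((l) : ℂ)))⁻¹) + (h - 1) * (1 - (q : ℂ)) * (∑' l : ℕ, Complex.exp (t / (1 - (q : ℂ))) * ((-1) ^ l * (t / (1 - (q : ℂ))) ^ l / ((l).factorial : ℂ)) * qcpow q (((l) : ℂ) * (x : ℂ)) * (1 - qcpow q (((l) : ℂ) + h - 1))⁻¹)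
      = (h - 1) * (1 - (q : ℂ)) * (∑' l : ℕ, Complex.exp (t / (1 - (q : ℂ))) * ((-1) ^ l * (t / (1 - (q : ℂ))) ^ l / ((l).factorial : ℂ)) * qcpow q (((l) : ℂ) * (x : ℂ)) * (1 - qcpow q (((l) : ℂ) + h - 1))⁻¹) + ∑' l : ℕ, -t * (Complex.exp (t / (1 - (q : ℂ))) * ((-1) ^ l * (t / (1 - (q : ℂ))) ^ l / ((l).factorial : ℂ)) * qcpow q ((x : ℂ) + ((l) : ℂ) * (x : ℂ)) * (1 - qcpow q (h + ((l) : ℂ)))⁻¹) := by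
        rw [tsum_mul_left]; ring
    _ = (h - 1) * (1 - (q : ℂ)) * (∑' l : ℕ, Complex.exp (t / (1 - (q : ℂ))) * ((-1) ^ l * (t / (1 - (q : ℂ))) ^ l / ((l).factorial : ℂ)) * qcpow q (((l) : ℂ) * (x : ℂ)) * (1 - qcpow q (((l) : ℂ) + h - 1))⁻¹) +
        ∑' l : ℕ, ((((l + 1 : ℕ)) : ℂ) * (1 - (q : ℂ)) * (Complex.exp (t / (1 - (q : ℂ))) * ((-1) ^ (l + 1) * (t / (1 - (q : ℂ))) ^ (l + 1) / (((l + 1)).factorial : ℂ)) * qcpow q ((((l + 1 : ℕ)) : ℂ) * (x : ℂ)) * (1 - qcpow q ((((l + 1 : ℕ)) : ℂ) + h - 1))⁻¹)) := by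
        rw [tsum_congr fun l => hshift l]
    _ = (h - 1) * (1 - (q : ℂ)) * (∑' l : ℕ, Complex.exp (t / (1 - (q : ℂ))) * ((-1) ^ l * (t / (1 - (q : ℂ))) ^ l / ((l).factorial : ℂ)) * qcpow q (((l) : ℂ) * (x : ℂ)) * (1 - qcpow q (((l) : ℂ) + h - 1))⁻¹) +
        ∑' l : ℕ, ((l : ℂ) * (1 - (q : ℂ)) * (Complex.exp (t / (1 - (q : ℂ))) * ((-1) ^ l * (t / (1 - (q : ℂ))) ^ l / ((l).factorial : ℂ)) * qcpow q (((l) : ℂ) * (x : ℂ)) * (1 - qcpow q (((l) : ℂ) + h - 1))⁻¹)) := by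
        rw [hDsum.tsum_eq_zero_add]
        norm_num
    _ = ∑' l : ℕ, ((h - 1) * (1 - (q : ℂ)) * (Complex.exp (t / (1 - (q : ℂ))) * ((-1) ^ l * (t / (1 - (q : ℂ))) ^ l / ((l).factorial : ℂ)) * qcpow q (((l) : ℂ) * (x : ℂ)) * (1 - qcpow q (((l) : ℂ) + h - 1))⁻¹) +
          ((l : ℂ) * (1 - (q : ℂ)) * (Complex.exp (t / (1 - (q : ℂ))) * ((-1) ^ l * (t / (1 - (q : ℂ))) ^ l / ((l).factorial : ℂ)) * qcpow q (((l) : ℂ) * (x : ℂ)) * (1 - qcpow q (((l) : ℂ) + h - 1))⁻¹))) := by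
        rw [Summable.tsum_add (hG2sum.mul_left _) hDsum, tsum_mul_left]
    _ = ∑' l : ℕ, Complex.exp (t / (1 - (q : ℂ))) * ((-1) ^ l * qcpow q (((l) : ℂ) * (x : ℂ)) * ((((l) : ℂ) + h - 1) / qnum q (((l) : ℂ) + h - 1)) * (1 / (1 - (q : ℂ))) ^ l * t ^ l / ((l).factorial : ℂ)) := tsum_congr fun l => (hkey l).symm
    _ = Complex.exp (t / (1 - (q : ℂ))) * ∑' l : ℕ, (-1) ^ l * qcpow q (((l) : ℂ) * (x : ℂ)) * ((((l) : ℂ) + h - 1) / qnum q (((l) : ℂ) + h - 1)) * (1 / (1 - (q : ℂ))) ^ l * t ^ l / ((l).factorial : ℂ) := tsum_mul_left
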